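/- Let M be a real m_A × m_B matrix with m_A ≥ m_B, and let d ≥ m_B. Then the supremum over unit vectors a_i, b_j ∈ ℝ^d of Σ_{i,j} M_{ij} ⟨a_i, b_j⟩ equals the supremum taken with vectors in ℝ^{m_B}. -/

import Mathlib

open scoped InnerProductSpace

namespace Stmt4Aux

/-- Coordinate embedding of Euclidean spaces as a linear isometry. -/
noncomputable def emb {k n : ℕ} (h : k ≤ n) :
    EuclideanSpace ℝ (Fin k) →ₗᵢ[ℝ] EuclideanSpace ℝ (Fin n) where
  toLinearMap := (WithLp.linearEquiv 2 ℝ (Fin n → ℝ)).symm.toLinearMap ∘ₗ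
    Function.ExtendByZero.linearMap ℝ (Fin.castLE h) ∘ₗ (WithLp.linearEquiv 2 ℝ (Fin k → ℝ)).toLinearMap
  norm_map' := by
    classical
    intro x
    have hinj : Function.Injective (Fin.castLE h) := Fin.castLE_injective h
    rw [EuclideanSpace.norm_eq, EuclideanSpace.norm_eq]
    congr 1
    have key : ∀ i : Fin k,
        (Function.ExtendByZero.linearMap ℝ (Fin.castLE h)) x (Fin.castLE h i) = x i := by
      intro i
      exact hinj.extend_apply _ _ _
    have h0 : ∀ j : Fin n, j ∉ (Finset.univ.map ⟨Fin.castLE h, hinj⟩) →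
        (Function.ExtendByZero.linearMap ℝ (Fin.castLE h)) x j = 0 := by
      intro j hj
      have : ¬ ∃ i, Fin.castLE h i = j := by
        intro ⟨i, hi⟩
        exact hj (Finset.mem_map.2 ⟨i, Finset.mem_univ i, hi⟩)
      exact Function.extend_apply' _ _ _ this
    calc ∑ i : Fin n, ‖(Function.ExtendByZero.linearMap ℝ (Fin.castLE h)) x i‖ ^ 2
        = ∑ i ∈ Finset.univ.map ⟨Fin.castLE h, hinj⟩,
            ‖(Function.ExtendByZero.linearMap ℝ (Fin.castLE h)) x i‖ ^ 2 := by
          refine (Finset.sum_subset (Finset.subset_univ _) ?_).symm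
          intro j _ hj
          rw [h0 j hj]; simp
      _ = ∑ i : Fin k, ‖x i‖ ^ 2 := by
          rw [Finset.sum_map]
          refine Finset.sum_congr rfl fun i _ => by rw [show ({ toFun := Fin.castLE h, inj' := hinj } : Fin k ↪ Fin n) i = Fin.castLE h i from rfl, key i]

/-- Any finite-dimensional real inner product space of finrank ≤ n embeds
isometrically into `EuclideanSpace ℝ (Fin n)`. -/
noncomputable def isomEmb (E : Type*) [NormedAddCommGroup E] [InnerProductSpace ℝ E]
    [FiniteDimensional ℝ E] {n : ℕ} (h : Module.finrank ℝ E ≤ n) :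
    E →ₗᵢ[ℝ] EuclideanSpace ℝ (Fin n) :=
  (emb h).comp (stdOrthonormalBasis ℝ E).repr.toLinearIsometry

lemma sup_eq_zero_of_subset_zero {S : Set ℝ} (h : S ⊆ {0}) : sSup S = 0 := by
  rcases Set.subset_singleton_iff_eq.1 h with h' | h'
  · simp [h']
  · simp [h']

lemma bddAbove_set (mA mB n : ℕ) (M : Matrix (Fin mA) (Fin mB) ℝ) :
    BddAbove {x : ℝ | ∃ a : Fin mA → EuclideanSpace ℝ (Fin n),
        ∃ b : Fin mB → EuclideanSpace ℝ (Fin n),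
        (∀ i, ‖a i‖ = 1) ∧ (∀ j, ‖b j‖ = 1) ∧
        x = ∑ i, ∑ j, M i j * ⟪a i, b j⟫_ℝ} := by
  refine ⟨∑ i, ∑ j, |M i j|, ?_⟩
  rintro x ⟨a, b, ha, hb, rfl⟩
  refine Finset.sum_le_sum fun i _ => Finset.sum_le_sum fun j _ => ?_
  calc M i j * ⟪a i, b j⟫_ℝ ≤ |M i j * ⟪a i, b j⟫_ℝ| := le_abs_self _
    _ = |M i j| * |⟪a i, b j⟫_ℝ| := abs_mul _ _
    _ ≤ |M i j| * 1 := by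
        refine mul_le_mul_of_nonneg_left ?_ (abs_nonneg _)
        calc |⟪a i, b j⟫_ℝ| ≤ ‖a i‖ * ‖b j‖ := abs_real_inner_le_norm _ _
          _ = 1 := by rw [ha i, hb j, mul_one]
    _ = |M i j| := mul_one _

lemma nonempty_set (mA mB n : ℕ) (hn : 0 < n) (M : Matrix (Fin mA) (Fin mB) ℝ) :
    ({x : ℝ | ∃ a : Fin mA → EuclideanSpace ℝ (Fin n),
        ∃ b : Fin mB → EuclideanSpace ℝ (Fin n),
        (∀ i, ‖a i‖ = 1) ∧ (∀ j, ‖b j‖ = 1) ∧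
        x = ∑ i, ∑ j, M i j * ⟪a i, b j⟫_ℝ}).Nonempty := by
  set e : EuclideanSpace ℝ (Fin n) := EuclideanSpace.single (⟨0, hn⟩ : Fin n) (1 : ℝ)
  have he : ‖e‖ = 1 := by simp [e, EuclideanSpace.norm_single]
  exact ⟨_, fun _ => e, fun _ => e, fun _ => he, fun _ => he, rfl⟩

end Stmt4Aux

theorem stmt4 (mA mB d : ℕ) (hAB : mB ≤ mA) (hd : mB ≤ d)
    (M : Matrix (Fin mA) (Fin mB) ℝ) :
    sSup {x : ℝ | ∃ a : Fin mA → EuclideanSpace ℝ (Fin d),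
        ∃ b : Fin mB → EuclideanSpace ℝ (Fin d),
        (∀ i, ‖a i‖ = 1) ∧ (∀ j, ‖b j‖ = 1) ∧
        x = ∑ i, ∑ j, M i j * ⟪a i, b j⟫_ℝ} =
    sSup {x : ℝ | ∃ a : Fin mA → EuclideanSpace ℝ (Fin mB),
        ∃ b : Fin mB → EuclideanSpace ℝ (Fin mB),
        (∀ i, ‖a i‖ = 1) ∧ (∀ j, ‖b j‖ = 1) ∧
        x = ∑ i, ∑ j, M i j * ⟪a i, b j⟫_ℝ} := by
  classical
  rcases Nat.eq_zero_or_pos mB with hmB | hmB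
  · subst hmB
    rw [Stmt4Aux.sup_eq_zero_of_subset_zero, Stmt4Aux.sup_eq_zero_of_subset_zero] <;>
      · rintro x ⟨a, b, ha, hb, rfl⟩
        simp
  · have hd1 : 0 < d := lt_of_lt_of_le hmB hd
    have bdd₁ := Stmt4Aux.bddAbove_set mA mB d M
    have bdd₂ := Stmt4Aux.bddAbove_set mA mB mB M
    have ne₁ := Stmt4Aux.nonempty_set mA mB d hd1 M
    have ne₂ := Stmt4Aux.nonempty_set mA mB mB hmB M
    apply le_antisymm
    · -- hard direction
      refine csSup_le ne₁ ?_
      rintro x ⟨a, b, ha, hb, rfl⟩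
      set V : Submodule ℝ (EuclideanSpace ℝ (Fin d)) := Submodule.span ℝ (Set.range b) with hVdef
      have hV : Module.finrank ℝ V ≤ mB := by
        simpa [Set.finrank] using finrank_range_le_card (R := ℝ) b
      let φ : V →ₗᵢ[ℝ] EuclideanSpace ℝ (Fin mB) := Stmt4Aux.isomEmb V hV
      let bV : Fin mB → V := fun j => ⟨b j, Submodule.subset_span ⟨j, rfl⟩⟩
      let w : Fin mA → V := fun i => ∑ j, M i j • bV j
      let a' : Fin mA → EuclideanSpace ℝ (Fin mB) := fun i =>
        if h : w i = 0 then φ (bV ⟨0, hmB⟩) else φ (‖w i‖⁻¹ • w i)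
      let b' : Fin mB → EuclideanSpace ℝ (Fin mB) := fun j => φ (bV j)
      have hbV : ∀ j, ‖bV j‖ = 1 := fun j => hb j
      have ha' : ∀ i, ‖a' i‖ = 1 := by
        intro i
        by_cases h : w i = 0
        · simp [a', h, φ.norm_map, hbV]
        · simp only [a', h, dif_neg, not_false_iff, φ.norm_map]
          exact norm_smul_inv_norm h
      have hb' : ∀ j, ‖b' j‖ = 1 := fun j => by simp [b', φ.norm_map, hbV]
      have hwcoe : ∀ i, ((w i : EuclideanSpace ℝ (Fin d))) = ∑ j, M i j • b j := by
        intro i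
        simp [w, bV]
      -- x ≤ ∑ i, ‖w i‖
      have hx : ∑ i, ∑ j, M i j * ⟪a i, b j⟫_ℝ ≤ ∑ i, ‖w i‖ := by
        refine Finset.sum_le_sum fun i _ => ?_
        have : ∑ j, M i j * ⟪a i, b j⟫_ℝ = ⟪a i, (w i : EuclideanSpace ℝ (Fin d))⟫_ℝ := by
          rw [hwcoe, inner_sum]
          exact Finset.sum_congr rfl fun j _ => (real_inner_smul_right _ _ _).symm
        rw [this]
        calc ⟪a i, (w i : EuclideanSpace ℝ (Fin d))⟫_ℝ
            ≤ ‖a i‖ * ‖(w i : EuclideanSpace ℝ (Fin d))‖ := real_inner_le_norm _ _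
          _ = ‖w i‖ := by rw [ha i, one_mul]; rfl
      -- ∑ i, ‖w i‖ is attained in the small space
      have hy : (∑ i, ‖w i‖) ∈ {x : ℝ | ∃ a : Fin mA → EuclideanSpace ℝ (Fin mB),
          ∃ b : Fin mB → EuclideanSpace ℝ (Fin mB),
          (∀ i, ‖a i‖ = 1) ∧ (∀ j, ‖b j‖ = 1) ∧
          x = ∑ i, ∑ j, M i j * ⟪a i, b j⟫_ℝ} := by
        refine ⟨a', b', ha', hb', ?_⟩
        refine (Finset.sum_congr rfl fun i _ => ?_).symm
        have key : ∑ j, M i j * ⟪a' i, b' j⟫_ℝ = ⟪a' i, φ (w i)⟫_ℝ := by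
          have : φ (w i) = ∑ j, M i j • b' j := by
            simp [w, b', map_sum, map_smul]
          rw [this, inner_sum]
          exact Finset.sum_congr rfl fun j _ => (real_inner_smul_right _ _ _).symm
        rw [key]
        by_cases h : w i = 0
        · simp [a', h]
        · simp only [a', h, dif_neg, not_false_iff]
          rw [φ.inner_map_map]
          rw [@real_inner_smul_left _ _ V.innerProductSpace]
          rw [real_inner_self_eq_norm_mul_norm,
            ← mul_assoc, inv_mul_cancel₀ (norm_ne_zero_iff.2 h), one_mul]
      exact hx.trans (le_csSup bdd₂ hy)
    · -- easy direction: embed the small space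
      refine csSup_le_csSup bdd₁ ne₂ ?_
      rintro x ⟨a, b, ha, hb, rfl⟩
      have hfr : Module.finrank ℝ (EuclideanSpace ℝ (Fin mB)) ≤ d := by
        rw [finrank_euclideanSpace_fin]; exact hd
      let ψ := Stmt4Aux.isomEmb (EuclideanSpace ℝ (Fin mB)) hfr
      refine ⟨ψ ∘ a, ψ ∘ b, fun i => by simp [ψ.norm_map, ha i],
        fun j => by simp [ψ.norm_map, hb j], ?_⟩
      refine Finset.sum_congr rfl fun i _ => Finset.sum_congr rfl fun j _ => ?_
      rw [Function.comp_apply, Function.comp_apply, ψ.inner_map_map]
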